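/- Let X be a real Hilbert space, K ⊆ ℝᵐ a nonempty compact convex set, and A : K → (ℝᵐ →L X) a map with values in the continuous linear maps from ℝᵐ to X such that A(p) is injective for every p ∈ K and A is Lipschitz continuous on K, i.e. ‖A(p) − A(q)‖ ≤ C‖p − q‖ for some C > 0 and all p, q ∈ K. For p ∈ K let B(p) : X → ℝᵐ denote the (unique) continuous linear map satisfying B(p) ∘ A(p) = id, A(p) ∘ B(p) = orthogonal projection onto range A(p), and B(p) ∘ A(p) ∘ B(p) = B(p). Then there exist constants C_I, C_L' > 0 such that ‖B(p)‖ ≤ C_I and ‖B(p) − B(q)‖ ≤ C_L' ‖p − q‖ for all p, q ∈ K. -/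

import Mathlib

open scoped InnerProductSpace

set_option maxHeartbeats 1000000 in
/-- uniform boundedness and Lipschitz continuity of Moore–Penrose
inverses `B(p)` of a Lipschitz family of injective linear maps `A(p)` on a compact
convex set `K`. -/
theorem stmt3 {X : Type*} [NormedAddCommGroup X] [InnerProductSpace ℝ X] [CompleteSpace X]
    {m : ℕ} (K : Set (EuclideanSpace ℝ (Fin m)))
    (hKne : K.Nonempty) (hKcompact : IsCompact K) (hKconv : Convex ℝ K)
    (A : EuclideanSpace ℝ (Fin m) → (EuclideanSpace ℝ (Fin m) →L[ℝ] X))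
    (hAinj : ∀ p ∈ K, Function.Injective (A p))
    (C : ℝ) (hC : 0 < C)
    (hALip : ∀ p ∈ K, ∀ q ∈ K, ‖A p - A q‖ ≤ C * ‖p - q‖)
    (B : EuclideanSpace ℝ (Fin m) → (X →L[ℝ] EuclideanSpace ℝ (Fin m)))
    (hBA : ∀ p ∈ K, (B p).comp (A p) = ContinuousLinearMap.id ℝ (EuclideanSpace ℝ (Fin m)))
    (hAB : ∀ p ∈ K, ∀ x : X, A p (B p x) =
      (Submodule.orthogonalProjection (LinearMap.range ((A p) : EuclideanSpace ℝ (Fin m) →ₗ[ℝ] X)) x : X))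
    (hBAB : ∀ p ∈ K, ∀ x : X, B p (A p (B p x)) = B p x) :
    ∃ C_I C_L' : ℝ, 0 < C_I ∧ 0 < C_L' ∧
      (∀ p ∈ K, ‖B p‖ ≤ C_I) ∧
      (∀ p ∈ K, ∀ q ∈ K, ‖B p - B q‖ ≤ C_L' * ‖p - q‖) := by
  classical
  rcases Nat.eq_zero_or_pos m with hm | hm
  · -- trivial case: the domain is a subsingleton, so every `B p` is zero
    haveI : Subsingleton (EuclideanSpace ℝ (Fin m)) := by
      subst hm
      exact ⟨fun a b => PiLp.ext fun i => i.elim0⟩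
    have hB0 : ∀ p, B p = 0 := fun p =>
      ContinuousLinearMap.ext fun x => Subsingleton.elim _ _
    refine ⟨1, 1, one_pos, one_pos, ?_, ?_⟩
    · intro p hp; rw [hB0 p]; simp
    · intro p hp q hq; rw [hB0 p, hB0 q, sub_zero, norm_zero]; positivity
  -- the main case
  haveI : Nonempty (Fin m) := ⟨⟨0, hm⟩⟩
  -- continuity of A on K
  have lipA : LipschitzOnWith C.toNNReal A K := by
    apply LipschitzOnWith.of_dist_le_mul
    intro p hp q hq
    rw [dist_eq_norm, dist_eq_norm]
    simpa [Real.coe_toNNReal _ hC.le] using hALip p hp q hq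
  -- the set K × sphere is compact and nonempty
  set S : Set (EuclideanSpace ℝ (Fin m)) := Metric.sphere (0 : (EuclideanSpace ℝ (Fin m))) 1 with hS
  have hSne : S.Nonempty := NormedSpace.sphere_nonempty.mpr zero_le_one
  have hTcomp : IsCompact (K ×ˢ S) := hKcompact.prod (isCompact_sphere 0 1)
  have hTne : (K ×ˢ S).Nonempty := hKne.prod hSne
  have hcont : ContinuousOn (fun z : (EuclideanSpace ℝ (Fin m)) × (EuclideanSpace ℝ (Fin m)) => ‖A z.1 z.2‖) (K ×ˢ S) := by
    have h1 : ContinuousOn (fun z : (EuclideanSpace ℝ (Fin m)) × (EuclideanSpace ℝ (Fin m)) => A z.1 z.2) (K ×ˢ S) := by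
      have hA : ContinuousOn (fun z : (EuclideanSpace ℝ (Fin m)) × (EuclideanSpace ℝ (Fin m)) => A z.1) (K ×ˢ S) :=
        lipA.continuousOn.comp continuousOn_fst (fun z hz => hz.1)
      exact (isBoundedBilinearMap_apply.continuous.comp_continuousOn
        (hA.prodMk continuousOn_snd))
    exact h1.norm
  obtain ⟨z₀, hz₀, hminOn⟩ := hTcomp.exists_isMinOn hTne hcont
  have hmin := isMinOn_iff.mp hminOn
  set σ : ℝ := ‖A z₀.1 z₀.2‖ with hσdef
  have hσ : 0 < σ := by
    have hz2 : z₀.2 ≠ 0 := by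
      have : ‖z₀.2‖ = 1 := mem_sphere_zero_iff_norm.mp hz₀.2
      intro h; rw [h, norm_zero] at this; norm_num at this
    have : A z₀.1 z₀.2 ≠ 0 := by
      intro h
      exact hz2 (hAinj _ hz₀.1 (by simpa using h))
    simpa [hσdef] using norm_pos_iff.mpr this
  -- uniform lower bound
  have key : ∀ p ∈ K, ∀ x : (EuclideanSpace ℝ (Fin m)), σ * ‖x‖ ≤ ‖A p x‖ := by
    intro p hp x
    rcases eq_or_ne x 0 with rfl | hx
    · simp
    · have hxn : ‖x‖ ≠ 0 := norm_ne_zero_iff.mpr hx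
      have hu : (‖x‖⁻¹ • x) ∈ S := by
        simp [hS, mem_sphere_zero_iff_norm, norm_smul, abs_of_nonneg (norm_nonneg x),
          inv_mul_cancel₀ hxn]
      have := hmin (p, ‖x‖⁻¹ • x) ⟨hp, hu⟩
      simp only [map_smul, norm_smul, norm_inv, norm_norm] at this
      calc σ * ‖x‖ ≤ (‖x‖⁻¹ * ‖A p x‖) * ‖x‖ := by
            exact mul_le_mul_of_nonneg_right this (norm_nonneg x)
        _ = ‖A p x‖ := by field_simp
  -- the projection bound : ‖A p (B p x)‖ ≤ ‖x‖
  have hproj : ∀ p ∈ K, ∀ x : X, ‖A p (B p x)‖ ≤ ‖x‖ := by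
    intro p hp x
    have hmem : x - A p (B p x) ∈ (LinearMap.range ((A p) : (EuclideanSpace ℝ (Fin m)) →ₗ[ℝ] X))ᗮ := by
      rw [hAB p hp x]
      exact Submodule.sub_starProjection_mem_orthogonal x
    have h0 : ⟪A p (B p x), x - A p (B p x)⟫_ℝ = 0 :=
      Submodule.inner_right_of_mem_orthogonal (LinearMap.mem_range.mpr ⟨B p x, rfl⟩) hmem
    have hsum : A p (B p x) + (x - A p (B p x)) = x := by abel
    have hsq := norm_add_sq_real (A p (B p x)) (x - A p (B p x))
    rw [hsum, h0] at hsq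
    nlinarith [norm_nonneg (x - A p (B p x)), norm_nonneg x, norm_nonneg (A p (B p x))]
  -- uniform bound on B
  have hBbound : ∀ p ∈ K, ∀ x : X, ‖B p x‖ ≤ σ⁻¹ * ‖x‖ := by
    intro p hp x
    have h1 : σ * ‖B p x‖ ≤ ‖A p (B p x)‖ := key p hp _
    have h2 := hproj p hp x
    rw [inv_mul_eq_div, le_div_iff₀ hσ]
    nlinarith
  have hBA' : ∀ p ∈ K, ∀ v : (EuclideanSpace ℝ (Fin m)), B p (A p v) = v := by
    intro p hp v
    have := hBA p hp
    calc B p (A p v) = ((B p).comp (A p)) v := rfl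
      _ = v := by rw [this]; rfl
  refine ⟨σ⁻¹, 3 * σ⁻¹ * σ⁻¹ * C, inv_pos.mpr hσ, by positivity, ?_, ?_⟩
  · intro p hp
    exact (B p).opNorm_le_bound (by positivity) (hBbound p hp)
  · intro p hp q hq
    apply (B p - B q).opNorm_le_bound (by positivity)
    intro x
    set u : X := x - A q (B q x) with hu
    -- u is orthogonal to the range of A q
    have horth : ∀ z : (EuclideanSpace ℝ (Fin m)), ⟪A q z, u⟫_ℝ = 0 := by
      intro z
      have hmem : u ∈ (LinearMap.range ((A q) : (EuclideanSpace ℝ (Fin m)) →ₗ[ℝ] X))ᗮ := by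
        rw [hu, hAB q hq x]
        exact Submodule.sub_starProjection_mem_orthogonal x
      exact Submodule.inner_right_of_mem_orthogonal (LinearMap.mem_range.mpr ⟨z, rfl⟩) hmem
    -- bound on ‖A p (B p u)‖
    have hABu : ‖A p (B p u)‖ ≤ σ⁻¹ * ‖A p - A q‖ * ‖u‖ := by
      have hsq : ‖A p (B p u)‖ ^ 2 = ⟪A p (B p u), u⟫_ℝ := by
        have hself : ⟪A p (B p u), u - A p (B p u)⟫_ℝ = 0 := by
          have hmem : u - A p (B p u) ∈ (LinearMap.range ((A p) : (EuclideanSpace ℝ (Fin m)) →ₗ[ℝ] X))ᗮ := by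
            rw [hAB p hp u]
            exact Submodule.sub_starProjection_mem_orthogonal u
          exact Submodule.inner_right_of_mem_orthogonal (LinearMap.mem_range.mpr ⟨B p u, rfl⟩) hmem
        have : ⟪A p (B p u), u⟫_ℝ
            = ⟪A p (B p u), A p (B p u)⟫_ℝ + ⟪A p (B p u), u - A p (B p u)⟫_ℝ := by
          rw [← inner_add_right]; congr 1; abel
        rw [this, hself, add_zero, real_inner_self_eq_norm_sq]
      have hinner : ⟪A p (B p u), u⟫_ℝ = ⟪(A p - A q) (B p u), u⟫_ℝ := by
        have : (A p - A q) (B p u) = A p (B p u) - A q (B p u) := rfl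
        rw [this, inner_sub_left, horth (B p u), sub_zero]
      have hcs : ⟪(A p - A q) (B p u), u⟫_ℝ ≤ ‖A p - A q‖ * ‖B p u‖ * ‖u‖ := by
        calc ⟪(A p - A q) (B p u), u⟫_ℝ ≤ ‖(A p - A q) (B p u)‖ * ‖u‖ :=
              real_inner_le_norm _ _
          _ ≤ ‖A p - A q‖ * ‖B p u‖ * ‖u‖ :=
              mul_le_mul_of_nonneg_right ((A p - A q).le_opNorm _) (norm_nonneg u)
      have hBpu : σ * ‖B p u‖ ≤ ‖A p (B p u)‖ := key p hp _
      -- from ‖Pu‖² ≤ ‖ΔA‖ ‖B p u‖ ‖u‖ and σ‖B p u‖ ≤ ‖Pu‖ conclude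
      rcases eq_or_lt_of_le (norm_nonneg (A p (B p u))) with h0 | h0
      · rw [← h0]; positivity
      · have h1 : ‖A p (B p u)‖ ^ 2 ≤ ‖A p - A q‖ * ‖B p u‖ * ‖u‖ := by
          rw [hsq, hinner]; exact hcs
        have h2 : ‖B p u‖ ≤ σ⁻¹ * ‖A p (B p u)‖ := by
          rw [inv_mul_eq_div, le_div_iff₀ hσ]; nlinarith
        have h3 : ‖A p (B p u)‖ ^ 2 ≤ ‖A p - A q‖ * (σ⁻¹ * ‖A p (B p u)‖) * ‖u‖ := by
          calc ‖A p (B p u)‖ ^ 2 ≤ ‖A p - A q‖ * ‖B p u‖ * ‖u‖ := h1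
            _ ≤ ‖A p - A q‖ * (σ⁻¹ * ‖A p (B p u)‖) * ‖u‖ := by
                apply mul_le_mul_of_nonneg_right _ (norm_nonneg u)
                exact mul_le_mul_of_nonneg_left h2 (norm_nonneg _)
        nlinarith [norm_nonneg (A p - A q), norm_nonneg u]
    -- bound on ‖B p u‖
    have hBpu2 : ‖B p u‖ ≤ σ⁻¹ * (σ⁻¹ * ‖A p - A q‖ * ‖u‖) := by
      have h1 : σ * ‖B p u‖ ≤ ‖A p (B p u)‖ := key p hp _
      rw [inv_mul_eq_div, le_div_iff₀ hσ]
      nlinarith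
    -- ‖u‖ ≤ 2 ‖x‖
    have hunorm : ‖u‖ ≤ 2 * ‖x‖ := by
      calc ‖u‖ ≤ ‖x‖ + ‖A q (B q x)‖ := norm_sub_le _ _
        _ ≤ ‖x‖ + ‖x‖ := by linarith [hproj q hq x]
        _ = 2 * ‖x‖ := by ring
    -- decomposition
    have hdecomp : (B p - B q) x = B p u + B p ((A q - A p) (B q x)) := by
      have h1 : B p (A p (B q x)) = B q x := hBA' p hp (B q x)
      have hsub : (A q - A p) (B q x) = A q (B q x) - A p (B q x) :=
        ContinuousLinearMap.sub_apply _ _ _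
      have harg : u + (A q - A p) (B q x) = x - A p (B q x) := by
        rw [hu, hsub]; abel
      calc (B p - B q) x = B p x - B q x := rfl
        _ = B p x - B p (A p (B q x)) := by rw [h1]
        _ = B p (x - A p (B q x)) := (map_sub _ _ _).symm
        _ = B p (u + (A q - A p) (B q x)) := by rw [harg]
        _ = B p u + B p ((A q - A p) (B q x)) := map_add _ _ _
    have hterm2 : ‖B p ((A q - A p) (B q x))‖ ≤ σ⁻¹ * (‖A p - A q‖ * (σ⁻¹ * ‖x‖)) := by
      calc ‖B p ((A q - A p) (B q x))‖ ≤ σ⁻¹ * ‖(A q - A p) (B q x)‖ := hBbound p hp _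
        _ ≤ σ⁻¹ * (‖A q - A p‖ * ‖B q x‖) := by
            exact mul_le_mul_of_nonneg_left ((A q - A p).le_opNorm _) (by positivity)
        _ ≤ σ⁻¹ * (‖A p - A q‖ * (σ⁻¹ * ‖x‖)) := by
            rw [norm_sub_rev (A q) (A p)]
            apply mul_le_mul_of_nonneg_left _ (by positivity)
            exact mul_le_mul_of_nonneg_left (hBbound q hq x) (norm_nonneg _)
    have hΔ : ‖A p - A q‖ ≤ C * ‖p - q‖ := hALip p hp q hq
    have hΔnn : (0:ℝ) ≤ ‖A p - A q‖ := norm_nonneg _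
    calc ‖(B p - B q) x‖ = ‖B p u + B p ((A q - A p) (B q x))‖ := by rw [hdecomp]
      _ ≤ ‖B p u‖ + ‖B p ((A q - A p) (B q x))‖ := norm_add_le _ _
      _ ≤ σ⁻¹ * (σ⁻¹ * ‖A p - A q‖ * (2 * ‖x‖)) + σ⁻¹ * (‖A p - A q‖ * (σ⁻¹ * ‖x‖)) := by
          have : ‖B p u‖ ≤ σ⁻¹ * (σ⁻¹ * ‖A p - A q‖ * (2 * ‖x‖)) := by
            apply hBpu2.trans
            apply mul_le_mul_of_nonneg_left _ (by positivity)
            exact mul_le_mul_of_nonneg_left hunorm (by positivity)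
          linarith [hterm2]
      _ = 3 * σ⁻¹ * σ⁻¹ * ‖A p - A q‖ * ‖x‖ := by ring
      _ ≤ 3 * σ⁻¹ * σ⁻¹ * (C * ‖p - q‖) * ‖x‖ := by
          apply mul_le_mul_of_nonneg_right _ (norm_nonneg x)
          apply mul_le_mul_of_nonneg_left hΔ (by positivity)
      _ = 3 * σ⁻¹ * σ⁻¹ * C * ‖p - q‖ * ‖x‖ := by ring
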